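/- Let G be a simple d-regular graph (d ≥ 1) on a finite vertex set V of size n, and let x, y : V → {1,2,3,⊥} be two proper partial 3-colorings of G (i.e., no edge of G has both endpoints assigned the same color from {1,2,3} by x, and likewise for y). For a permutation π of {1,2,3} let V_π = {u ∈ V : x(u) ∈ {1,2,3} and y(u) = π(x(u))}, and let V_⊥ = {u ∈ V : x(u) = ⊥ or y(u) = ⊥}. Then: (a) ∑_{π even} |V_π| = ∑_{π odd} |V_π| = n − |V_⊥|, where the sums are over the three even and the three odd permutations of {1,2,3}; (b) ∑_{π ∈ Sym({1,2,3})} e(V_π, V∖V_π) ≤ n·d, where e(S, V∖S) is the number of edges of G with exactly one endpoint in S (note n·d = 2|E(G)|). -/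

import Mathlib

open Finset

/-- Number of edges of `G` with exactly one endpoint in `S` (counted via the
orientation whose first coordinate lies in `S`). -/
def crossCount {V : Type*} [Fintype V] [DecidableEq V] (G : SimpleGraph V)
    [DecidableRel G.Adj] (S : Finset V) : ℕ :=
  (Finset.univ.filter (fun p : V × V => G.Adj p.1 p.2 ∧ p.1 ∈ S ∧ p.2 ∉ S)).card

lemma permCountEven : ∀ σ τ : Fin 3,
    ((univ : Finset (Equiv.Perm (Fin 3))).filter
      (fun π => Equiv.Perm.sign π = 1 ∧ π σ = τ)).card = 1 := by decide

lemma permCountOdd : ∀ σ τ : Fin 3,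
    ((univ : Finset (Equiv.Perm (Fin 3))).filter
      (fun π => Equiv.Perm.sign π = -1 ∧ π σ = τ)).card = 1 := by decide

lemma pairBound : ∀ a b c d : Option (Fin 3),
    (∀ σ : Fin 3, ¬(a = some σ ∧ c = some σ)) → (∀ τ : Fin 3, ¬(b = some τ ∧ d = some τ)) →
    ((univ : Finset (Equiv.Perm (Fin 3))).filter
        (fun π => (∃ σ : Fin 3, a = some σ ∧ b = some (π σ)) ∧
          ¬∃ σ : Fin 3, c = some σ ∧ d = some (π σ))).card
      + ((univ : Finset (Equiv.Perm (Fin 3))).filter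
        (fun π => (∃ σ : Fin 3, c = some σ ∧ d = some (π σ)) ∧
          ¬∃ σ : Fin 3, a = some σ ∧ b = some (π σ))).card ≤ 2 := by decide

theorem partial_colorings_partition_and_cut_bound
    {V : Type*} [Fintype V] [DecidableEq V]
    (G : SimpleGraph V) [DecidableRel G.Adj]
    (d n : ℕ) (hd : 1 ≤ d) (hreg : G.IsRegularOfDegree d)
    (hn : n = Fintype.card V)
    (x y : V → Option (Fin 3))
    (hx : ∀ u v : V, G.Adj u v → ∀ σ : Fin 3, ¬(x u = some σ ∧ x v = some σ))
    (hy : ∀ u v : V, G.Adj u v → ∀ σ : Fin 3, ¬(y u = some σ ∧ y v = some σ)) :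
    (∑ π ∈ Finset.univ.filter (fun π : Equiv.Perm (Fin 3) => Equiv.Perm.sign π = 1),
        (Finset.univ.filter
          (fun u : V => ∃ σ : Fin 3, x u = some σ ∧ y u = some (π σ))).card
      = n - (Finset.univ.filter (fun u : V => x u = none ∨ y u = none)).card) ∧
    (∑ π ∈ Finset.univ.filter (fun π : Equiv.Perm (Fin 3) => Equiv.Perm.sign π = -1),
        (Finset.univ.filter
          (fun u : V => ∃ σ : Fin 3, x u = some σ ∧ y u = some (π σ))).card
      = n - (Finset.univ.filter (fun u : V => x u = none ∨ y u = none)).card) ∧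
    (∑ π : Equiv.Perm (Fin 3),
        crossCount G (Finset.univ.filter
          (fun u : V => ∃ σ : Fin 3, x u = some σ ∧ y u = some (π σ)))
      ≤ n * d) := by
  -- common part (a) machinery
  have key : ∀ (E : Finset (Equiv.Perm (Fin 3))),
      (∀ σ τ : Fin 3, (E.filter (fun π => π σ = τ)).card = 1) →
      ∑ π ∈ E, (univ.filter
          (fun u : V => ∃ σ : Fin 3, x u = some σ ∧ y u = some (π σ))).card
        = n - (univ.filter (fun u : V => x u = none ∨ y u = none)).card := by
    intro E hE
    have h1 : ∑ π ∈ E, (univ.filter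
          (fun u : V => ∃ σ : Fin 3, x u = some σ ∧ y u = some (π σ))).card
        = ∑ u : V, (E.filter
          (fun π => ∃ σ : Fin 3, x u = some σ ∧ y u = some (π σ))).card := by
      simp only [Finset.card_filter]
      exact Finset.sum_comm
    rw [h1]
    have h2 : ∀ u : V, (E.filter
          (fun π => ∃ σ : Fin 3, x u = some σ ∧ y u = some (π σ))).card
        = if (x u = none ∨ y u = none) then 0 else 1 := by
      intro u
      rcases hxu : x u with _ | σ
      · simp [hxu]
      · rcases hyu : y u with _ | τ
        · simp [hxu, hyu]
        · rw [if_neg (by simp [hxu, hyu])]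
          rw [← hE σ τ]
          congr 1
          apply Finset.filter_congr
          intro π _
          simp [hxu, hyu, eq_comm]
    calc ∑ u : V, (E.filter
          (fun π => ∃ σ : Fin 3, x u = some σ ∧ y u = some (π σ))).card
        = ∑ u : V, if (x u = none ∨ y u = none) then 0 else 1 := by
          exact Finset.sum_congr rfl (fun u _ => h2 u)
      _ = (univ.filter (fun u : V => ¬(x u = none ∨ y u = none))).card := by
          rw [Finset.card_filter]
          exact Finset.sum_congr rfl
            (fun u _ => by by_cases h : x u = none ∨ y u = none <;> simp [h])
      _ = n - (univ.filter (fun u : V => x u = none ∨ y u = none)).card := by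
          have := Finset.card_filter_add_card_filter_not
            (s := (univ : Finset V)) (p := fun u : V => x u = none ∨ y u = none)
          subst hn
          simp only [Finset.card_univ] at this
          omega
  refine ⟨?_, ?_, ?_⟩
  · apply key
    intro σ τ
    rw [Finset.filter_filter]
    exact permCountEven σ τ
  · apply key
    intro σ τ
    rw [Finset.filter_filter]
    exact permCountOdd σ τ
  · -- part (b)
    set f : V → V → ℕ := fun u v =>
      ((univ : Finset (Equiv.Perm (Fin 3))).filter
        (fun π => G.Adj u v ∧ (∃ σ : Fin 3, x u = some σ ∧ y u = some (π σ)) ∧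
          ¬ ∃ σ : Fin 3, x v = some σ ∧ y v = some (π σ))).card with hf_def
    -- rewrite the LHS as a sum over ordered pairs
    have hL : (∑ π : Equiv.Perm (Fin 3),
        crossCount G (univ.filter
          (fun u : V => ∃ σ : Fin 3, x u = some σ ∧ y u = some (π σ))))
        = ∑ p : V × V, f p.1 p.2 := by
      simp only [crossCount, hf_def, Finset.card_filter, Finset.mem_filter, Finset.mem_univ,
        true_and]
      exact Finset.sum_comm
    rw [hL]
    -- pointwise bound
    have hpt : ∀ u v : V, f u v + f v u ≤ 2 * (if G.Adj u v then 1 else 0) := by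
      intro u v
      by_cases hadj : G.Adj u v
      · have hadj' : G.Adj v u := G.adj_symm hadj
        rw [if_pos hadj, mul_one]
        simp only [hf_def, hadj, hadj', true_and]
        exact pairBound (x u) (y u) (x v) (y v) (hx u v hadj) (hy u v hadj)
      · have hadj' : ¬ G.Adj v u := fun h => hadj (G.adj_symm h)
        simp [hf_def, hadj, hadj']
    -- swap symmetry
    have hswap : ∑ p : V × V, f p.2 p.1 = ∑ p : V × V, f p.1 p.2 := by
      rw [Fintype.sum_prod_type, Fintype.sum_prod_type]
      exact Finset.sum_comm
    -- count of ordered adjacent pairs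
    have hadjcount : ∑ p : V × V, (if G.Adj p.1 p.2 then 1 else 0) = n * d := by
      rw [Fintype.sum_prod_type]
      have hdeg : ∀ u : V, (∑ v : V, if G.Adj u v then 1 else 0) = d := by
        intro u
        have h1 : (∑ v : V, if G.Adj u v then 1 else 0)
            = (univ.filter (fun v => G.Adj u v)).card := by
          rw [Finset.card_filter]
        rw [h1, ← SimpleGraph.neighborFinset_eq_filter]
        exact hreg u
      rw [Finset.sum_congr rfl (fun u _ => hdeg u)]
      simp [hn, mul_comm]
    have hmain : 2 * (∑ p : V × V, f p.1 p.2) ≤ 2 * (n * d) := by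
      calc 2 * (∑ p : V × V, f p.1 p.2)
          = (∑ p : V × V, f p.1 p.2) + (∑ p : V × V, f p.2 p.1) := by
            rw [hswap]; ring
        _ = ∑ p : V × V, (f p.1 p.2 + f p.2 p.1) := by rw [Finset.sum_add_distrib]
        _ ≤ ∑ p : V × V, 2 * (if G.Adj p.1 p.2 then 1 else 0) :=
            Finset.sum_le_sum (fun p _ => hpt p.1 p.2)
        _ = 2 * ∑ p : V × V, (if G.Adj p.1 p.2 then 1 else 0) := by
            rw [Finset.mul_sum]
        _ = 2 * (n * d) := by rw [hadjcount]
    omega
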